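/- Let \(A \in \mathbf{R}^{n\times n}\), \(B\in\mathbf{R}^{n\times q}\), \(C\in\mathbf{R}^{m\times n}\), and \(\gamma>0\). Suppose there exists a symmetric positive definite matrix \(X\) such that \(A^T X + X A + \tfrac{1}{\gamma^2} X B B^T X + C^T C < 0\) (i.e., this matrix is negative definite). Then \(A\) is Hurwitz stable: every eigenvalue of \(A\) has negative real part. -/

import Mathlib

open Matrix

private lemma re_quad {n : ℕ} (M : Matrix (Fin n) (Fin n) ℝ) (v : Fin n → ℂ) :
    (star v ⬝ᵥ (M.map Complex.ofReal) *ᵥ v).re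
    = (fun i => (v i).re) ⬝ᵥ M *ᵥ (fun i => (v i).re)
      + (fun i => (v i).im) ⬝ᵥ M *ᵥ (fun i => (v i).im) := by
  simp only [dotProduct, mulVec, map_apply, Pi.star_apply, Complex.star_def,
    Complex.re_sum, Finset.mul_sum, ← Finset.sum_add_distrib]
  refine Finset.sum_congr rfl fun i _ => Finset.sum_congr rfl fun j _ => ?_
  simp [Complex.mul_re, Complex.mul_im]

private lemma quad_pos {n : ℕ} {M : Matrix (Fin n) (Fin n) ℝ} (hM : M.PosDef)
    {v : Fin n → ℂ} (hv : v ≠ 0) :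
    0 < (star v ⬝ᵥ (M.map Complex.ofReal) *ᵥ v).re := by
  rw [re_quad]
  set a : Fin n → ℝ := fun i => (v i).re with ha
  set b : Fin n → ℝ := fun i => (v i).im with hb
  have hab : a ≠ 0 ∨ b ≠ 0 := by
    by_contra h
    push_neg at h
    apply hv
    funext i
    have h1 := congrFun h.1 i
    have h2 := congrFun h.2 i
    simp [ha, hb] at h1 h2
    exact Complex.ext h1 h2
  have key : ∀ x : Fin n → ℝ, star x ⬝ᵥ M *ᵥ x = x ⬝ᵥ M *ᵥ x := fun x => rfl
  rcases hab with h | h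
  · have := hM.dotProduct_mulVec_pos h
    have h2 := hM.posSemidef.dotProduct_mulVec_nonneg b
    rw [key] at this; rw [key] at h2
    linarith
  · have := hM.dotProduct_mulVec_pos h
    have h2 := hM.posSemidef.dotProduct_mulVec_nonneg a
    rw [key] at this; rw [key] at h2
    linarith

/-- A real square matrix is Hurwitz stable if all its complex eigenvalues
have strictly negative real part. -/
def Hurwitz {n : ℕ} (A : Matrix (Fin n) (Fin n) ℝ) : Prop :=
  ∀ μ : ℂ, ((A.map (Complex.ofReal)) - μ • 1).det = 0 → μ.re < 0

/-- `M < 0`: symmetric negative definite. -/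
def NegDef {n : ℕ} (M : Matrix (Fin n) (Fin n) ℝ) : Prop := (-M).PosDef

theorem bounded_real_lemma_stability {n q m : ℕ}
    (A : Matrix (Fin n) (Fin n) ℝ) (B : Matrix (Fin n) (Fin q) ℝ)
    (C : Matrix (Fin m) (Fin n) ℝ) (γ : ℝ) (hγ : 0 < γ)
    (X : Matrix (Fin n) (Fin n) ℝ) (hX : X.PosDef)
    (hlmi : NegDef (Aᵀ * X + X * A + (γ ^ 2)⁻¹ • (X * B * Bᵀ * X) + Cᵀ * C)) :
    Hurwitz A := by
  -- N := -(AᵀX + XA) is positive definite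
  have hXsymm : Xᵀ = X := hX.1
  have hPSD1 : ((γ ^ 2)⁻¹ • (X * B * Bᵀ * X)).PosSemidef := by
    have h := posSemidef_conjTranspose_mul_self (γ⁻¹ • (Bᵀ * X))
    have heq : (γ⁻¹ • (Bᵀ * X))ᴴ * (γ⁻¹ • (Bᵀ * X))
        = (γ ^ 2)⁻¹ • (X * B * Bᵀ * X) := by
      rw [conjTranspose_eq_transpose_of_trivial, transpose_smul, transpose_mul,
        hXsymm, transpose_transpose, Matrix.smul_mul, Matrix.mul_smul, smul_smul,
        ← mul_inv, ← sq]
      congr 1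
      simp [Matrix.mul_assoc]
    rwa [heq] at h
  have hPSD2 : (Cᵀ * C).PosSemidef := by
    have h := posSemidef_conjTranspose_mul_self C
    rwa [conjTranspose_eq_transpose_of_trivial] at h
  have hN : (-(Aᵀ * X + X * A)).PosDef := by
    have heq : -(Aᵀ * X + X * A)
        = -(Aᵀ * X + X * A + (γ ^ 2)⁻¹ • (X * B * Bᵀ * X) + Cᵀ * C)
          + ((γ ^ 2)⁻¹ • (X * B * Bᵀ * X) + Cᵀ * C) := by
      abel
    rw [heq]
    exact hlmi.add_posSemidef (hPSD1.add hPSD2)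
  -- now the eigenvalue argument
  intro μ hdet
  obtain ⟨v, hv0, hv⟩ := (Matrix.exists_mulVec_eq_zero_iff).mpr hdet
  set Ac := A.map Complex.ofReal with hAc
  set Xc := X.map Complex.ofReal with hXc
  have hAv : Ac *ᵥ v = μ • v := by
    have := hv
    rw [sub_mulVec, sub_eq_zero] at this
    rw [this, smul_mulVec, one_mulVec]
  -- Ac *ᵥ star v = star μ • star v
  have hAstar : Ac *ᵥ star v = star μ • star v := by
    funext i
    have h := congrFun hAv i
    simp only [mulVec, dotProduct, Pi.smul_apply, smul_eq_mul] at h ⊢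
    have : ∑ j, Ac i j * (star v) j = star (∑ j, Ac i j * v j) := by
      rw [star_sum]
      refine Finset.sum_congr rfl fun j _ => ?_
      simp [hAc, mul_comm]
    rw [this, h]
    simp [mul_comm]
  set s : ℂ := star v ⬝ᵥ Xc *ᵥ v with hs
  have hq : star v ⬝ᵥ ((Aᵀ * X + X * A).map Complex.ofReal) *ᵥ v
      = (star μ + μ) * s := by
    have hmap : (Aᵀ * X + X * A).map Complex.ofReal
        = (A.map Complex.ofReal)ᵀ * Xc + Xc * A.map Complex.ofReal := by
      ext i j
      simp [hXc, Matrix.mul_apply, Matrix.add_apply, Matrix.map_apply,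
        Matrix.transpose_apply, Finset.sum_add_distrib]
    rw [hmap, ← hAc]
    rw [add_mulVec, dotProduct_add, ← mulVec_mulVec, ← mulVec_mulVec]
    rw [dotProduct_mulVec, vecMul_transpose]
    rw [hAstar, hAv, mulVec_smul, dotProduct_smul, smul_dotProduct]
    simp [hs, hAc, hXc, add_mul, smul_eq_mul]
  have hsre : 0 < s.re := quad_pos hX hv0
  have hqre : (star v ⬝ᵥ ((Aᵀ * X + X * A).map Complex.ofReal) *ᵥ v).re < 0 := by
    have h := quad_pos hN hv0
    have heq : ((-(Aᵀ * X + X * A)).map Complex.ofReal)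
        = -((Aᵀ * X + X * A).map Complex.ofReal) := by
      funext i j; simp
    rw [heq] at h
    simp only [neg_mulVec, dotProduct_neg, Complex.neg_re] at h
    linarith
  rw [hq] at hqre
  have hsum : star μ + μ = ((2 * μ.re : ℝ) : ℂ) := by
    apply Complex.ext <;> simp [Complex.add_re, Complex.add_im] <;> ring
  rw [hsum] at hqre
  rw [Complex.mul_re] at hqre
  simp only [Complex.ofReal_re, Complex.ofReal_im, zero_mul, sub_zero] at hqre
  nlinarith
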